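/- (Optimality of log-odds weighting, Nitzan–Paroush) Let the ground truth be a uniformly random bit, and let m experts cast votes v_1, …, v_m ∈ {0,1} that are independent given the truth, where expert e votes correctly with probability p_e ∈ (0,1). Then the deterministic aggregation rule that outputs 1 if Σ_{e : v_e = 1} w*_e > Σ_{e : v_e = 0} w*_e and 0 if the reverse strict inequality holds, with weights w*_e = log(p_e/(1 - p_e)), maximizes the probability of outputting the ground truth: no function f : {0,1}^m → {0,1} has a strictly larger probability of matching the ground truth. -/

import Mathlib

open scoped Classical

/-- The probability that a deterministic aggregation rule `f` on `m` experts'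
votes matches a uniformly random binary ground truth, when expert `e` votes
correctly with probability `p e`, independently given the truth. In the first
sum the truth is `true`, in the second it is `false`. -/
noncomputable def juryAccuracy {m : ℕ} (p : Fin m → ℝ) (f : (Fin m → Bool) → Bool) : ℝ :=
  (1 / 2) * ∑ vs : Fin m → Bool,
      (∏ e, if vs e then p e else 1 - p e) * (if f vs then 1 else 0)
  + (1 / 2) * ∑ vs : Fin m → Bool,
      (∏ e, if vs e then 1 - p e else p e) * (if f vs then 0 else 1)

lemma jury_eq {m : ℕ} (p : Fin m → ℝ) (f : (Fin m → Bool) → Bool) :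
    juryAccuracy p f = (1 / 2) * ∑ vs : Fin m → Bool,
      (if f vs then ∏ e, (if vs e then p e else 1 - p e)
       else ∏ e, (if vs e then 1 - p e else p e)) := by
  unfold juryAccuracy
  rw [← mul_add, ← Finset.sum_add_distrib]
  congr 1
  apply Finset.sum_congr rfl
  intro vs _
  by_cases h : f vs <;> simp [h]

lemma key {m : ℕ} (p : Fin m → ℝ) (hp : ∀ e, p e ∈ Set.Ioo (0 : ℝ) 1) (vs : Fin m → Bool) :
    ((∑ e ∈ Finset.univ.filter (fun e => vs e = true), Real.log (p e / (1 - p e)) >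
      ∑ e ∈ Finset.univ.filter (fun e => vs e = false), Real.log (p e / (1 - p e)))
    ↔ (∏ e, if vs e then 1 - p e else p e) < ∏ e, if vs e then p e else 1 - p e) := by
  have hApos : (0:ℝ) < ∏ e, (if vs e then p e else 1 - p e) :=
    Finset.prod_pos fun e _ => by
      by_cases h : vs e <;> simp [h, (hp e).1, sub_pos.mpr (hp e).2]
  have hBpos : (0:ℝ) < ∏ e, (if vs e then 1 - p e else p e) :=
    Finset.prod_pos fun e _ => by
      by_cases h : vs e <;> simp [h, (hp e).1, sub_pos.mpr (hp e).2]
  rw [← Real.log_lt_log_iff hBpos hApos]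
  rw [Real.log_prod (fun e _ => ne_of_gt (by
      by_cases h : vs e <;> simp [h, (hp e).1, sub_pos.mpr (hp e).2])),
    Real.log_prod (fun e _ => ne_of_gt (by
      by_cases h : vs e <;> simp [h, (hp e).1, sub_pos.mpr (hp e).2]))]
  rw [gt_iff_lt, ← sub_pos, ← sub_pos (b := ∑ e, Real.log (if vs e then 1 - p e else p e)),
    ← Finset.sum_sub_distrib, Finset.sum_filter, Finset.sum_filter, ← Finset.sum_sub_distrib]
  have : ∀ e : Fin m,
      ((if vs e = true then Real.log (p e / (1 - p e)) else 0) -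
        (if vs e = false then Real.log (p e / (1 - p e)) else 0)) =
      (Real.log (if vs e then p e else 1 - p e) - Real.log (if vs e then 1 - p e else p e)) := by
    intro e
    have h1 : p e ≠ 0 := ne_of_gt (hp e).1
    have h2 : 1 - p e ≠ 0 := ne_of_gt (sub_pos.mpr (hp e).2)
    by_cases h : vs e <;> simp [h, Real.log_div h1 h2]
  rw [Finset.sum_congr rfl (fun e _ => this e)]

/-- Nitzan–Paroush: The weighted majority rule with the log-odds
weights `w*_e = log (p e / (1 - p e))` maximizes the probability of matching
the ground truth among all deterministic aggregation rules. -/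
theorem log_odds_weighting_optimal
    {m : ℕ} (p : Fin m → ℝ) (hp : ∀ e, p e ∈ Set.Ioo (0 : ℝ) 1)
    (f : (Fin m → Bool) → Bool) :
    juryAccuracy p f ≤
      juryAccuracy p (fun vs =>
        if (∑ e ∈ Finset.univ.filter (fun e => vs e = true), Real.log (p e / (1 - p e)) >
              ∑ e ∈ Finset.univ.filter (fun e => vs e = false), Real.log (p e / (1 - p e)))
        then true else false) := by
  rw [jury_eq, jury_eq]
  apply mul_le_mul_of_nonneg_left _ (by norm_num)
  apply Finset.sum_le_sum
  intro vs _
  have hk := key p hp vs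
  by_cases hc : (∑ e ∈ Finset.univ.filter (fun e => vs e = true), Real.log (p e / (1 - p e)) >
      ∑ e ∈ Finset.univ.filter (fun e => vs e = false), Real.log (p e / (1 - p e)))
  · simp only [hc, if_true]
    by_cases h : f vs <;> simp [h]
    exact le_of_lt (hk.mp hc)
  · simp only [hc, if_false]
    have := hk.not.mp hc
    push_neg at this
    by_cases h : f vs <;> simp [h, this]
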